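/- Let A be a finite alphabet with |A| ≥ 2, k a positive integer, and let X ⊆ A* be a regular P̲_k-independent code. The following are equivalent: (i) X is maximal in the family of P̲_k-independent codes (i.e., any P̲_k-independent code containing X equals X); (ii) X is a maximal code; (iii) X is complete; (iv) μ(X) = 1, where μ is the uniform Bernoulli measure. -/

import Mathlib

open scoped ENNReal

/-- Length of a longest common prefix of `w` and `w'`. -/
noncomputable def lcpLen {A : Type*} (w w' : List A) : ℕ :=
  sSup {n | ∃ p : List A, p.length = n ∧ p <+: w ∧ p <+: w'}

/-- The prefix distance `d_P(w,w') = |w| + |w'| - 2|w ∧ w'|`. -/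
noncomputable def dP {A : Type*} (w w' : List A) : ℕ :=
  w.length + w'.length - 2 * lcpLen w w'

/-- Length of a longest common suffix of `w` and `w'`. -/
noncomputable def lcsLen {A : Type*} (w w' : List A) : ℕ :=
  sSup {n | ∃ s : List A, s.length = n ∧ s <:+ w ∧ s <:+ w'}

/-- The suffix distance `d_S(w,w') = |w| + |w'| - 2|s|`. -/
noncomputable def dS {A : Type*} (w w' : List A) : ℕ :=
  w.length + w'.length - 2 * lcsLen w w'

/-- Length of a longest common factor of `w` and `w'`. -/
noncomputable def lcfLen {A : Type*} (w w' : List A) : ℕ :=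
  sSup {n | ∃ f : List A, f.length = n ∧ f <:+: w ∧ f <:+: w'}

/-- The factor distance `d_F(w,w') = |w| + |w'| - 2|f|`,
`f` a maximum-length common factor. -/
noncomputable def dF {A : Type*} (w w' : List A) : ℕ :=
  w.length + w'.length - 2 * lcfLen w w'

/-- `n`-fold composition of a binary relation. -/
def relPow {α : Type*} (r : α → α → Prop) : ℕ → α → α → Prop
  | 0 => Eq
  | n + 1 => Relation.Comp (relPow r n) r

/-- `X` is a (variable-length) code: every word of `X*` factorizes uniquely over `X`. -/
def IsCode {A : Type*} (X : Set (List A)) : Prop :=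
  ∀ l m : List (List A), (∀ x ∈ l, x ∈ X) → (∀ x ∈ m, x ∈ X) →
    l.flatten = m.flatten → l = m

/-- `X` is complete: every word is a factor of some word of `X*`. -/
def IsCompleteSet {A : Type*} (X : Set (List A)) : Prop :=
  ∀ w : List A, ∃ l : List (List A), (∀ x ∈ l, x ∈ X) ∧ w <:+: l.flatten

/-- `X ⊆ A*` is a regular language: accepted by a finite deterministic automaton. -/
def IsRegularLang {A : Type*} (X : Set (List A)) : Prop :=
  ∃ (Q : Type) (_ : Fintype Q) (M : DFA A Q), M.accepts = X

/-- The uniform Bernoulli measure `μ(X) = Σ_{x ∈ X} |A|^{-|x|}`. -/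
noncomputable def mu (A : Type*) [Fintype A] (X : Set (List A)) : ℝ≥0∞ :=
  ∑' x : X, ((Fintype.card A : ℝ≥0∞))⁻¹ ^ (x : List A).length

namespace S13

set_option linter.unusedSectionVars false
open scoped Classical
variable {A : Type*}
lemma isCode_nil_not_mem {X : Set (List A)} (h : IsCode X) : [] ∉ X := fun hX => by
  have := h [[]] [] (by simpa using hX) (by simp) (by simp)
  simp at this


/-- weight of a word -/
noncomputable def wt (A : Type*) [Fintype A] (w : List A) : ℝ≥0∞ :=
  ((Fintype.card A : ℝ≥0∞))⁻¹ ^ w.length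

noncomputable def nu (A : Type*) [Fintype A] (S : Set (List A)) : ℝ≥0∞ :=
  ∑' w : List A, S.indicator (wt A) w

variable [Fintype A]

lemma nu_mono {S T : Set (List A)} (h : S ⊆ T) : nu A S ≤ nu A T :=
  ENNReal.tsum_le_tsum fun w => Set.indicator_le_indicator_of_subset h (fun _ => zero_le) w

lemma nu_singleton (z : List A) : nu A {z} = wt A z := by
  unfold nu
  rw [tsum_eq_single z]
  · simp
  · intro w hw; simp [Set.indicator_of_notMem, hw]

lemma sum_le_nu {S : Set (List A)} (F : Finset (List A)) (hF : ∀ w ∈ F, w ∈ S) :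
    ∑ w ∈ F, wt A w ≤ nu A S := by
  calc ∑ w ∈ F, wt A w = ∑ w ∈ F, S.indicator (wt A) w := by
        refine Finset.sum_congr rfl fun w hw => ?_
        rw [Set.indicator_of_mem (hF w hw)]
    _ ≤ nu A S := ENNReal.sum_le_tsum F

lemma nu_iUnion_le (S : ℕ → Set (List A)) : nu A (⋃ n, S n) ≤ ∑' n, nu A (S n) := by
  unfold nu
  rw [ENNReal.tsum_comm]
  refine ENNReal.tsum_le_tsum fun w => ?_
  by_cases hw : w ∈ ⋃ n, S n
  · obtain ⟨n, hn⟩ := Set.mem_iUnion.1 hw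
    calc (⋃ n, S n).indicator (wt A) w = wt A w := Set.indicator_of_mem hw _
      _ = (S n).indicator (wt A) w := (Set.indicator_of_mem hn _).symm
      _ ≤ ∑' n, (S n).indicator (wt A) w := ENNReal.le_tsum n
  · simp [Set.indicator_of_notMem hw]

lemma nu_insert_of_not_mem {S : Set (List A)} {z : List A} (hz : z ∉ S) :
    nu A (insert z S) = wt A z + nu A S := by
  have h2 : wt A z + nu A S = ∑' w : List A,
      (({z} : Set (List A)).indicator (wt A) w + S.indicator (wt A) w) := by
    rw [ENNReal.tsum_add]
    congr 1
    rw [← nu_singleton z]; rfl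
  rw [h2]
  unfold nu
  refine tsum_congr fun w => ?_
  by_cases hwz : w = z
  · subst hwz
    rw [Set.indicator_of_mem (Set.mem_insert _ _), Set.indicator_of_notMem hz]
    simp
  · by_cases hwS : w ∈ S
    · rw [Set.indicator_of_mem (Set.mem_insert_of_mem _ hwS), Set.indicator_of_mem hwS,
        Set.indicator_of_notMem (by simp [hwz])]
      simp
    · rw [Set.indicator_of_notMem hwS, Set.indicator_of_notMem (by simp [hwz, hwS]),
        Set.indicator_of_notMem (by simp [hwz])]
      simp




lemma kraft_pow_le {X : Set (List A)} (hA : 2 ≤ Fintype.card A) (hcode : IsCode X)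
    (F : Finset (List A)) (hF : ∀ w ∈ F, w ∈ X) (n : ℕ) :
    (∑ w ∈ F, ((Fintype.card A : ℝ))⁻¹ ^ w.length) ^ n
      ≤ ((n * F.sup List.length : ℕ) : ℝ) + 1 := by
  classical
  set q : ℝ := ((Fintype.card A : ℝ))⁻¹ with hq
  set L : ℕ := F.sup List.length with hL
  have hcardpos : (0:ℝ) < (Fintype.card A : ℝ) := by
    have : 0 < Fintype.card A := lt_of_lt_of_le (by norm_num) hA
    exact_mod_cast this
  have hqpos : 0 < q := inv_pos.2 hcardpos
  set Φ : (Fin n → List A) → List A := fun g => (List.ofFn g).flatten with hΦ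
  have hlenΦ : ∀ g : Fin n → List A, (Φ g).length = ∑ i, (g i).length := by
    intro g
    simp [hΦ, List.length_flatten, List.map_ofFn, List.sum_ofFn]
  have expand : (∑ w ∈ F, q ^ w.length) ^ n
      = ∑ g ∈ Fintype.piFinset (fun _ : Fin n => F), q ^ (Φ g).length := by
    have h0 : (∑ w ∈ F, q ^ w.length) ^ n = ∏ _i : Fin n, (∑ w ∈ F, q ^ w.length) := by
      rw [Finset.prod_const]; simp
    rw [h0, Finset.prod_univ_sum]
    refine Finset.sum_congr rfl fun g hg => ?_
    rw [Finset.prod_pow_eq_pow_sum, hlenΦ]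
  have hinj : ∀ g ∈ Fintype.piFinset (fun _ : Fin n => F),
      ∀ h ∈ Fintype.piFinset (fun _ : Fin n => F), Φ g = Φ h → g = h := by
    intro g hg h hh heq
    have hg' : ∀ x ∈ List.ofFn g, x ∈ X := by
      intro x hx
      obtain ⟨i, hi⟩ := List.mem_ofFn.1 hx
      exact hF _ (by simpa [← hi] using Fintype.mem_piFinset.1 hg i)
    have hh' : ∀ x ∈ List.ofFn h, x ∈ X := by
      intro x hx
      obtain ⟨i, hi⟩ := List.mem_ofFn.1 hx
      exact hF _ (by simpa [← hi] using Fintype.mem_piFinset.1 hh i)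
    exact List.ofFn_inj.1 (hcode _ _ hg' hh' heq)
  have himg : ∑ g ∈ Fintype.piFinset (fun _ : Fin n => F), q ^ (Φ g).length
      = ∑ w ∈ (Fintype.piFinset (fun _ : Fin n => F)).image Φ, q ^ w.length :=
    (Finset.sum_image (f := fun w => q ^ w.length) hinj).symm
  set W := (Fintype.piFinset (fun _ : Fin n => F)).image Φ with hW
  have hWlen : ∀ w ∈ W, w.length ≤ n * L := by
    intro w hw
    obtain ⟨g, hg, rfl⟩ := Finset.mem_image.1 hw
    rw [hlenΦ]
    calc ∑ i, (g i).length ≤ ∑ _i : Fin n, L := by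
          refine Finset.sum_le_sum fun i _ => ?_
          exact Finset.le_sup (Fintype.mem_piFinset.1 hg i)
      _ = n * L := by simp [Finset.sum_const, mul_comm]
  have hfiber : ∑ w ∈ W, q ^ w.length
      = ∑ m ∈ Finset.range (n * L + 1), ∑ w ∈ W.filter (fun w => w.length = m), q ^ w.length := by
    rw [Finset.sum_fiberwise_of_maps_to]
    intro w hw
    exact Finset.mem_range.2 (Nat.lt_succ_of_le (hWlen w hw))
  have hne : Nonempty A := Fintype.card_pos_iff.mp (by omega)
  obtain ⟨d⟩ := hne
  have hcount : ∀ m : ℕ,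
      ((W.filter (fun w => w.length = m)).card : ℝ) ≤ (Fintype.card A : ℝ) ^ m := by
    intro m
    have hc : (W.filter (fun w => w.length = m)).card ≤ Fintype.card (Fin m → A) := by
      rw [← Finset.card_univ]
      apply Finset.card_le_card_of_injOn (fun w (i : Fin m) => w.getD i d)
      · intro w _; exact Finset.mem_univ _
      · intro w hw w' hw' hgd
        have hwm : w.length = m := (Finset.mem_filter.1 hw).2
        have hw'm : w'.length = m := (Finset.mem_filter.1 hw').2
        apply List.ext_getElem (hwm.trans hw'm.symm)
        intro i h1 h2
        have := congrFun hgd ⟨i, hwm ▸ h1⟩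
        simpa [List.getD_eq_getElem, h1, h2] using this
    calc ((W.filter (fun w => w.length = m)).card : ℝ)
        ≤ (Fintype.card (Fin m → A) : ℝ) := by exact_mod_cast hc
      _ = (Fintype.card A : ℝ) ^ m := by
          rw [Fintype.card_fun]; simp
  have hinner : ∀ m ∈ Finset.range (n * L + 1),
      ∑ w ∈ W.filter (fun w => w.length = m), q ^ w.length ≤ 1 := by
    intro m _
    have : ∑ w ∈ W.filter (fun w => w.length = m), q ^ w.length
        = ((W.filter (fun w => w.length = m)).card : ℝ) * q ^ m := by
      rw [Finset.sum_congr rfl (fun w hw => by rw [(Finset.mem_filter.1 hw).2])]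
      rw [Finset.sum_const, nsmul_eq_mul]
    rw [this]
    calc ((W.filter (fun w => w.length = m)).card : ℝ) * q ^ m
        ≤ (Fintype.card A : ℝ) ^ m * q ^ m := by
          exact mul_le_mul_of_nonneg_right (hcount m) (by positivity)
      _ = 1 := by
          rw [← mul_pow, mul_inv_cancel₀ hcardpos.ne', one_pow]
  calc (∑ w ∈ F, q ^ w.length) ^ n = ∑ w ∈ W, q ^ w.length := by rw [expand, himg]
    _ = ∑ m ∈ Finset.range (n * L + 1), ∑ w ∈ W.filter (fun w => w.length = m), q ^ w.length :=
        hfiber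
    _ ≤ ∑ _m ∈ Finset.range (n * L + 1), (1:ℝ) := Finset.sum_le_sum hinner
    _ = ((n * L + 1 : ℕ) : ℝ) := by simp
    _ = ((n * L : ℕ) : ℝ) + 1 := by push_cast; ring

lemma kraft_finset_real {X : Set (List A)} (hA : 2 ≤ Fintype.card A) (hcode : IsCode X)
    (F : Finset (List A)) (hF : ∀ w ∈ F, w ∈ X) :
    ∑ w ∈ F, ((Fintype.card A : ℝ))⁻¹ ^ w.length ≤ 1 := by
  by_contra hcon
  push_neg at hcon
  set s : ℝ := ∑ w ∈ F, ((Fintype.card A : ℝ))⁻¹ ^ w.length with hs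
  set L : ℕ := F.sup List.length with hL
  have hspos : 0 < s := lt_trans one_pos hcon
  set x : ℝ := s⁻¹ with hx
  have hxpos : 0 < x := inv_pos.2 hspos
  have hxlt : x < 1 := inv_lt_one_of_one_lt₀ hcon
  have hsum1 : Summable (fun n : ℕ => (L:ℝ) * ((n:ℝ) * x ^ n)) := by
    refine Summable.mul_left _ ?_
    have := summable_pow_mul_geometric_of_norm_lt_one 1 (r := x)
      (by rw [Real.norm_eq_abs, abs_of_pos hxpos]; exact hxlt)
    simpa using this
  have hsum2 : Summable (fun n : ℕ => x ^ n) :=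
    summable_geometric_of_lt_one hxpos.le hxlt
  have hsum : Summable (fun n : ℕ => ((n * L : ℕ) : ℝ) * x ^ n + x ^ n) := by
    have := hsum1.add hsum2
    refine this.congr fun n => ?_
    push_cast; ring
  have htend := hsum.tendsto_atTop_zero
  have hev : ∀ᶠ n in Filter.atTop, ((n * L : ℕ) : ℝ) * x ^ n + x ^ n < 1 :=
    htend.eventually_lt_const one_pos
  obtain ⟨N, hN⟩ := hev.exists
  have hpow := kraft_pow_le hA hcode F hF N
  rw [← hs, ← hL] at hpow
  have hxs : x ^ N * s ^ N = 1 := by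
    rw [← mul_pow, inv_mul_cancel₀ hspos.ne', one_pow]
  have h1 : (((N * L : ℕ) : ℝ) + 1) * x ^ N < 1 := by
    calc (((N * L : ℕ) : ℝ) + 1) * x ^ N = ((N * L : ℕ) : ℝ) * x ^ N + x ^ N := by ring
      _ < 1 := hN
  have h2 : (((N * L : ℕ) : ℝ) + 1) < s ^ N := by
    have hsn : 0 < s ^ N := pow_pos hspos N
    calc (((N * L : ℕ) : ℝ) + 1) = ((((N * L : ℕ) : ℝ) + 1) * x ^ N) * s ^ N := by
          rw [mul_assoc, hxs, mul_one]
      _ < 1 * s ^ N := by exact mul_lt_mul_of_pos_right h1 hsn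
      _ = s ^ N := one_mul _
  exact absurd hpow (not_le.2 h2)


lemma wt_eq_ofReal (hA : 2 ≤ Fintype.card A) (w : List A) :
    wt A w = ENNReal.ofReal (((Fintype.card A : ℝ))⁻¹ ^ w.length) := by
  have hcardpos : (0:ℝ) < (Fintype.card A : ℝ) := by
    have : 0 < Fintype.card A := lt_of_lt_of_le (by norm_num) hA
    exact_mod_cast this
  rw [ENNReal.ofReal_pow (by positivity)]
  unfold wt
  congr 1
  rw [ENNReal.ofReal_inv_of_pos hcardpos, ENNReal.ofReal_natCast]

lemma kraft {X : Set (List A)} (hA : 2 ≤ Fintype.card A) (hcode : IsCode X) :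
    nu A X ≤ 1 := by
  classical
  unfold nu
  rw [ENNReal.tsum_eq_iSup_sum]
  refine iSup_le fun s => ?_
  have h1 : ∑ w ∈ s, X.indicator (wt A) w = ∑ w ∈ s.filter (· ∈ X), wt A w := by
    rw [Finset.sum_filter]
    refine Finset.sum_congr rfl fun w _ => ?_
    by_cases hw : w ∈ X <;> simp [Set.indicator_apply, hw]
  rw [h1]
  set F := s.filter (· ∈ X) with hF
  have hFX : ∀ w ∈ F, w ∈ X := fun w hw => (Finset.mem_filter.1 hw).2
  have hreal := kraft_finset_real hA hcode F hFX
  calc ∑ w ∈ F, wt A w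
      = ENNReal.ofReal (∑ w ∈ F, ((Fintype.card A : ℝ))⁻¹ ^ w.length) := by
        rw [ENNReal.ofReal_sum_of_nonneg (fun w _ => by positivity)]
        exact Finset.sum_congr rfl fun w _ => wt_eq_ofReal hA w
    _ ≤ 1 := ENNReal.ofReal_le_one.2 hreal

/-- `X*`: set of concatenations of words of `X`. -/
def star (X : Set (List A)) : Set (List A) :=
  {w | ∃ l : List (List A), (∀ x ∈ l, x ∈ X) ∧ l.flatten = w}

lemma nil_mem_star (X : Set (List A)) : [] ∈ star X := ⟨[], by simp, rfl⟩

lemma mem_star_of_mem {X : Set (List A)} {x : List A} (hx : x ∈ X) : x ∈ star X :=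
  ⟨[x], by simpa using hx, by simp⟩

lemma append_mem_star {X : Set (List A)} {u v : List A}
    (hu : u ∈ star X) (hv : v ∈ star X) : u ++ v ∈ star X := by
  obtain ⟨l, hl, rfl⟩ := hu
  obtain ⟨m, hm, rfl⟩ := hv
  refine ⟨l ++ m, ?_, by simp⟩
  intro x hx
  rcases List.mem_append.1 hx with h | h
  exacts [hl x h, hm x h]

lemma star_decomp {X : Set (List A)} {z : List A} (hz : z ∈ star X) (hne : z ≠ []) :
    ∃ u x, z = u ++ x ∧ u ∈ star X ∧ x ∈ X ∧ x ≠ [] := by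
  obtain ⟨l, hl, rfl⟩ := hz
  induction l using List.reverseRecOn with
  | nil => simp at hne
  | append_singleton l x ih =>
    by_cases hx : x = []
    · subst hx
      have hfl : (l ++ [[]]).flatten = l.flatten := by simp
      rw [hfl] at hne ⊢
      exact ih (fun y hy => hl y (List.mem_append_left _ hy)) hne
    · refine ⟨l.flatten, x, by simp, ⟨l, fun y hy => hl y (List.mem_append_left _ hy), rfl⟩,
        hl x (by simp), hx⟩

/-- words that are flattenings of length-`n` lists over `X` -/
def lenStar (X : Set (List A)) (n : ℕ) : Set (List A) :=
  {w | ∃ l : List (List A), l.length = n ∧ (∀ x ∈ l, x ∈ X) ∧ l.flatten = w}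

lemma star_eq_iUnion (X : Set (List A)) : star X = ⋃ n, lenStar X n := by
  ext w
  constructor
  · rintro ⟨l, hl, rfl⟩
    exact Set.mem_iUnion.2 ⟨l.length, l, rfl, hl, rfl⟩
  · intro hw
    obtain ⟨n, l, _, hl, rfl⟩ := Set.mem_iUnion.1 hw
    exact ⟨l, hl, rfl⟩

lemma wt_append (u v : List A) : wt A (u ++ v) = wt A u * wt A v := by
  unfold wt
  rw [List.length_append, pow_add]

lemma nu_concat_le (S T : Set (List A)) :
    nu A {w | ∃ s ∈ S, ∃ t ∈ T, s ++ t = w} ≤ nu A S * nu A T := by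
  classical
  set C : Set (List A) := {w | ∃ s ∈ S, ∃ t ∈ T, s ++ t = w} with hC
  have hCsub : nu A C = ∑' w : C, wt A w := (tsum_subtype C (wt A)).symm
  have hSsub : nu A S = ∑' p : S, wt A p := (tsum_subtype S (wt A)).symm
  have hTsub : nu A T = ∑' p : T, wt A p := (tsum_subtype T (wt A)).symm
  rw [hCsub, hSsub, hTsub]
  have hmem : ∀ w : C, ∃ s ∈ S, ∃ t ∈ T, s ++ t = (w : List A) := fun w => w.2
  choose f hf g hg hfg using hmem
  set e : C → S × T := fun w => (⟨f w, hf w⟩, ⟨g w, hg w⟩) with he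
  have hinj : Function.Injective e := by
    intro w w' hww
    have h1 : f w = f w' := congrArg (fun p => (p.1 : List A)) hww
    have h2 : g w = g w' := congrArg (fun p => (p.2 : List A)) hww
    apply Subtype.ext
    rw [← hfg w, ← hfg w', h1, h2]
  calc ∑' w : C, wt A (w : List A)
      ≤ ∑' p : S × T, wt A (p.1 : List A) * wt A (p.2 : List A) := by
        refine ENNReal.summable.tsum_le_tsum_of_inj e hinj (fun c _ => zero_le) (fun w => ?_)
          ENNReal.summable
        rw [← hfg w, wt_append]
    _ = (∑' p : S, wt A (p : List A)) * ∑' p : T, wt A (p : List A) := by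
        rw [ENNReal.tsum_prod (f := fun (a : ↑S) (b : ↑T) => wt A (a : List A) * wt A (b : List A))]
        calc ∑' (a : S) (b : T), wt A (a : List A) * wt A (b : List A)
            = ∑' a : S, wt A (a : List A) * ∑' b : T, wt A (b : List A) := by
              refine tsum_congr fun a => ?_
              rw [ENNReal.tsum_mul_left]
          _ = _ := ENNReal.tsum_mul_right

lemma nu_lenStar_le (X : Set (List A)) (n : ℕ) : nu A (lenStar X n) ≤ (nu A X) ^ n := by
  induction n with
  | zero =>
    have : lenStar X 0 = {[]} := by
      ext w
      constructor
      · rintro ⟨l, hl0, _, rfl⟩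
        rw [List.length_eq_zero_iff] at hl0
        simp [hl0]
      · rintro rfl
        exact ⟨[], rfl, by simp, rfl⟩
    rw [this, nu_singleton]
    simp [wt]
  | succ n ih =>
    have hsub : lenStar X (n + 1) ⊆ {w | ∃ s ∈ X, ∃ t ∈ lenStar X n, s ++ t = w} := by
      rintro w ⟨l, hlen, hl, rfl⟩
      cases l with
      | nil => simp at hlen
      | cons x l' =>
        refine ⟨x, hl x (by simp), l'.flatten, ⟨l', by simpa using hlen,
          fun y hy => hl y (List.mem_cons_of_mem _ hy), rfl⟩, by simp⟩
    calc nu A (lenStar X (n + 1)) ≤ nu A {w | ∃ s ∈ X, ∃ t ∈ lenStar X n, s ++ t = w} :=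
          nu_mono hsub
      _ ≤ nu A X * nu A (lenStar X n) := nu_concat_le _ _
      _ ≤ nu A X * (nu A X) ^ n := mul_le_mul_right ih _
      _ = (nu A X) ^ (n + 1) := (pow_succ' _ _).symm

lemma nu_star_ne_top {X : Set (List A)} (hlt : nu A X < 1) : nu A (star X) ≠ ⊤ := by
  have h1 : nu A (star X) ≤ ∑' n, (nu A X) ^ n := by
    rw [star_eq_iUnion]
    calc nu A (⋃ n, lenStar X n) ≤ ∑' n, nu A (lenStar X n) := nu_iUnion_le _
      _ ≤ ∑' n, (nu A X) ^ n := ENNReal.tsum_le_tsum (nu_lenStar_le X)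
  rw [ENNReal.tsum_geometric] at h1
  intro htop
  rw [htop] at h1
  have h2 : (1 - nu A X)⁻¹ = ⊤ := top_le_iff.1 h1
  rw [ENNReal.inv_eq_top] at h2
  rw [tsub_eq_zero_iff_le] at h2
  exact absurd h2 (not_le.2 hlt)

section DFApart
open scoped Classical

lemma exists_short_evalFrom {σ : Type*} [Fintype σ] (M : DFA A σ) (s : σ) (u : List A) :
    ∃ u' : List A, u'.length ≤ Fintype.card σ ∧ M.evalFrom s u' = M.evalFrom s u := by
  generalize hn : u.length = n
  induction n using Nat.strong_induction_on generalizing u with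
  | _ n ih =>
    subst hn
    by_cases h : u.length ≤ Fintype.card σ
    · exact ⟨u, h, rfl⟩
    push_neg at h
    have key : ∀ a b : Fin (Fintype.card σ + 1), (a : ℕ) < (b : ℕ) →
        M.evalFrom s (u.take a) = M.evalFrom s (u.take b) →
        ∃ u' : List A, u'.length ≤ Fintype.card σ ∧ M.evalFrom s u' = M.evalFrom s u := by
      intro a b hab heq
      have hbu : (b : ℕ) ≤ u.length := le_of_lt (lt_of_le_of_lt (Nat.lt_succ_iff.1 b.isLt) h)
      set u' : List A := u.take a ++ u.drop b with hu'
      have heval : M.evalFrom s u' = M.evalFrom s u := by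
        rw [hu', DFA.evalFrom_of_append, heq, ← DFA.evalFrom_of_append,
          List.take_append_drop]
      have hlen : u'.length < u.length := by
        rw [hu', List.length_append, List.length_take, List.length_drop]
        have ha : min (a : ℕ) u.length = (a : ℕ) := min_eq_left (le_trans (le_of_lt hab) hbu)
        omega
      obtain ⟨u'', h1, h2⟩ := ih u'.length hlen u' rfl
      exact ⟨u'', h1, h2.trans heval⟩
    obtain ⟨i, _, j, _, hij, heq⟩ := Finset.exists_ne_map_eq_of_card_lt_of_maps_to
      (s := (Finset.univ : Finset (Fin (Fintype.card σ + 1))))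
      (t := (Finset.univ : Finset σ))
      (f := fun i : Fin (Fintype.card σ + 1) => M.evalFrom s (u.take i))
      (by simp) (fun i _ => Finset.mem_univ _)
    rcases lt_or_gt_of_ne (fun hv : (i : ℕ) = (j : ℕ) => hij (Fin.ext hv)) with hlt | hlt
    · exact key i j hlt heq
    · exact key j i hlt heq.symm


lemma concat_decomp {w u v : List A} {c : A} (h : w ++ [c] = u ++ v) (hv : v ≠ []) :
    ∃ v', v = v' ++ [c] ∧ w = u ++ v' := by
  have hv2 : v = v.dropLast ++ [v.getLast hv] := (List.dropLast_append_getLast hv).symm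
  rw [hv2, ← List.append_assoc] at h
  obtain ⟨h1, h2⟩ := List.append_inj' h (by simp)
  have hc : v.getLast hv = c := by
    have := h2.symm
    simpa using this
  refine ⟨v.dropLast, ?_, h1⟩
  conv_lhs => rw [hv2]
  rw [hc]

variable {Q : Type*}

noncomputable def starDFA (M : DFA A Q) : DFA A (Q → Bool) where
  step := fun S c q' =>
    if (∃ q, S q = true ∧ M.step q c = q') ∨
       ((∃ q, S q = true ∧ M.step q c ∈ M.accept) ∧ q' = M.start) then true else false
  start := fun q => if q = M.start then true else false
  accept := {S | ∃ q, S q = true ∧ q ∈ M.accept}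

lemma starDFA_step_iff (M : DFA A Q) (S : Q → Bool) (c : A) (q' : Q) :
    (starDFA M).step S c q' = true ↔
      ((∃ q, S q = true ∧ M.step q c = q') ∨
       ((∃ q, S q = true ∧ M.step q c ∈ M.accept) ∧ q' = M.start)) := by
  by_cases h : (∃ q, S q = true ∧ M.step q c = q') ∨
       ((∃ q, S q = true ∧ M.step q c ∈ M.accept) ∧ q' = M.start) <;>
    simp [starDFA, h]

lemma starDFA_start_iff (M : DFA A Q) (q' : Q) :
    (starDFA M).start q' = true ↔ q' = M.start := by
  by_cases h : q' = M.start <;> simp [starDFA, h]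

lemma starDFA_eval_iff (M : DFA A Q) (w : List A) :
    ∀ q' : Q, ((starDFA M).eval w q' = true ↔
      ∃ u v, w = u ++ v ∧ u ∈ star M.accepts ∧ M.evalFrom M.start v = q') := by
  induction w using List.reverseRecOn with
  | nil =>
    intro q'
    show (starDFA M).start q' = true ↔ _
    rw [starDFA_start_iff]
    constructor
    · rintro rfl
      exact ⟨[], [], by simp, nil_mem_star _, rfl⟩
    · rintro ⟨u, v, huv, _, hv⟩
      obtain ⟨hu0, hv0⟩ := List.append_eq_nil_iff.1 huv.symm
      subst hu0; subst hv0
      exact hv.symm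
  | append_singleton w c ih =>
    intro q'
    have hstep : (starDFA M).eval (w ++ [c]) = (starDFA M).step ((starDFA M).eval w) c := by
      show (starDFA M).evalFrom _ _ = _
      rw [DFA.evalFrom_of_append]
      rfl
    rw [hstep, starDFA_step_iff]
    constructor
    · rintro (⟨q, hq, rfl⟩ | ⟨⟨q, hq, hacc⟩, rfl⟩)
      · obtain ⟨u, v, rfl, hu, hv⟩ := (ih q).1 hq
        refine ⟨u, v ++ [c], by simp, hu, ?_⟩
        rw [DFA.evalFrom_of_append, hv]
        rfl
      · obtain ⟨u, v, rfl, hu, hv⟩ := (ih q).1 hq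
        refine ⟨(u ++ v) ++ [c], [], by simp, ?_, rfl⟩
        have hvc : v ++ [c] ∈ M.accepts := by
          show M.evalFrom M.start (v ++ [c]) ∈ M.accept
          rw [DFA.evalFrom_of_append, hv]
          exact hacc
        have := append_mem_star hu (mem_star_of_mem hvc)
        simpa [List.append_assoc] using this
    · rintro ⟨u, v, huv, hu, hv⟩
      by_cases hvnil : v = []
      · subst hvnil
        right
        rw [List.append_nil] at huv
        subst huv
        obtain ⟨u0, x, hdecomp, hu0, hxX, hxne⟩ := star_decomp hu (by simp)
        obtain ⟨x', rfl, hw⟩ := concat_decomp hdecomp hxne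
        refine ⟨⟨M.evalFrom M.start x', (ih _).2 ⟨u0, x', hw, hu0, rfl⟩, ?_⟩, hv.symm⟩
        have hx : M.evalFrom M.start (x' ++ [c]) ∈ M.accept := hxX
        rw [DFA.evalFrom_of_append] at hx
        exact hx
      · left
        obtain ⟨v', rfl, hwv⟩ := concat_decomp huv hvnil
        refine ⟨M.evalFrom M.start v', (ih _).2 ⟨u, v', hwv, hu, rfl⟩, ?_⟩
        rw [← hv, DFA.evalFrom_of_append]
        rfl

lemma starDFA_accepts_sub (M : DFA A Q) {w : List A} (h : w ∈ (starDFA M).accepts) :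
    w ∈ star M.accepts := by
  obtain ⟨q, hq, hacc⟩ := h
  obtain ⟨u, v, rfl, hu, hv⟩ := (starDFA_eval_iff M w q).1 hq
  refine append_mem_star hu (mem_star_of_mem ?_)
  show M.evalFrom M.start v ∈ M.accept
  rw [hv]
  exact hacc

lemma mem_starDFA_accepts (M : DFA A Q) {w : List A} (hw : w ∈ star M.accepts)
    (hne : w ≠ []) : w ∈ (starDFA M).accepts := by
  obtain ⟨u, x, rfl, hu, hx, hxne⟩ := star_decomp hw hne
  exact ⟨M.evalFrom M.start x, (starDFA_eval_iff M _ _).2 ⟨u, x, rfl, hu, rfl⟩, hx⟩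

lemma bounded_completion {X : Set (List A)} {Q : Type} [Fintype Q] (M : DFA A Q)
    (hX : M.accepts = X)
    (hcomp : ∀ w : List A, ∃ p q, p ++ w ++ q ∈ star X) :
    ∃ C : ℕ, ∀ w : List A, ∃ p q : List A,
      p.length ≤ C ∧ q.length ≤ C ∧ p ++ w ++ q ∈ star X := by
  classical
  refine ⟨Fintype.card (Q → Bool), fun w => ?_⟩
  obtain ⟨p, q, hpq⟩ := hcomp w
  by_cases hnil : p ++ w ++ q = []
  · have hw : w = [] := by
      rcases List.append_eq_nil_iff.1 hnil with ⟨h1, _⟩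
      exact (List.append_eq_nil_iff.1 h1).2
    refine ⟨[], [], by simp, by simp, ?_⟩
    simp only [hw, List.append_nil, List.nil_append]
    exact nil_mem_star X
  · subst hX
    set D := starDFA M with hD
    have hacc : p ++ (w ++ q) ∈ D.accepts :=
      mem_starDFA_accepts M (by simpa [List.append_assoc] using hpq)
        (by simpa [List.append_assoc] using hnil)
    obtain ⟨p', hp'len, hp'⟩ := exists_short_evalFrom D D.start p
    obtain ⟨q', hq'len, hq'⟩ :=
      exists_short_evalFrom D (D.evalFrom (D.evalFrom D.start p) w) q
    have haccept : p' ++ (w ++ q') ∈ D.accepts := by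
      show D.evalFrom D.start (p' ++ (w ++ q')) ∈ D.accept
      rw [DFA.evalFrom_of_append, hp', DFA.evalFrom_of_append, hq']
      have h2 : D.evalFrom D.start (p ++ (w ++ q)) ∈ D.accept := hacc
      rwa [DFA.evalFrom_of_append, DFA.evalFrom_of_append] at h2
    refine ⟨p', q', hp'len, hq'len, ?_⟩
    have := starDFA_accepts_sub M haccept
    simpa [List.append_assoc] using this


end DFApart

lemma nu_star_top {X : Set (List A)} (hA : 2 ≤ Fintype.card A) (C : ℕ)
    (hC : ∀ w : List A, ∃ p q : List A,
      p.length ≤ C ∧ q.length ≤ C ∧ p ++ w ++ q ∈ star X) :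
    nu A (star X) = ⊤ := by
  classical
  choose p q hC' using hC
  have hp : ∀ w, (p w).length ≤ C := fun w => (hC' w).1
  have hq : ∀ w, (q w).length ≤ C := fun w => (hC' w).2.1
  have hmem : ∀ w, p w ++ w ++ q w ∈ star X := fun w => (hC' w).2.2
  set r : ℝ≥0∞ := ((Fintype.card A : ℝ≥0∞))⁻¹ with hr
  have hcard0 : (Fintype.card A : ℝ≥0∞) ≠ 0 := by
    simp only [ne_eq, Nat.cast_eq_zero]
    omega
  have hcardtop : (Fintype.card A : ℝ≥0∞) ≠ ⊤ := ENNReal.natCast_ne_top _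
  have hr0 : r ≠ 0 := by
    rw [hr]
    exact ENNReal.inv_ne_zero.2 hcardtop
  have hr1 : r ≤ 1 := by
    rw [hr]
    refine ENNReal.inv_le_one.2 ?_
    exact_mod_cast Nat.one_le_iff_ne_zero.2 (by omega)
  set Wm : ℕ → Finset (List A) := fun m => (Finset.univ : Finset (Fin m → A)).image List.ofFn
    with hWm
  have hWm_len : ∀ m, ∀ w ∈ Wm m, w.length = m := by
    intro m w hw
    obtain ⟨g, _, rfl⟩ := Finset.mem_image.1 hw
    simp
  have hWm_card : ∀ m, (Wm m).card = Fintype.card A ^ m := by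
    intro m
    rw [hWm]
    simp only []
    rw [Finset.card_image_of_injective _ (fun g h hgh => List.ofFn_inj.1 hgh)]
    rw [Finset.card_univ, Fintype.card_fun]
    simp
  set comp : List A → List A := fun w => p w ++ w ++ q w with hcomp
  set Fm : ℕ → Finset (List A) := fun m => (Wm m).image comp with hFm
  have hFm_mem : ∀ m, ∀ z ∈ Fm m, z ∈ star X := by
    intro m z hz
    obtain ⟨w, _, rfl⟩ := Finset.mem_image.1 hz
    exact hmem w
  have hFm_len : ∀ m, ∀ z ∈ Fm m, m ≤ z.length ∧ z.length ≤ m + 2 * C := by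
    intro m z hz
    obtain ⟨w, hw, rfl⟩ := Finset.mem_image.1 hz
    have hwlen := hWm_len m w hw
    have h1 : (comp w).length = (p w).length + w.length + (q w).length := by
      simp [hcomp]
      omega
    have h2 := hp w
    have h3 := hq w
    rw [h1, hwlen]
    omega
  have hFm_card : ∀ m, Fintype.card A ^ m ≤ (C + 1) ^ 2 * (Fm m).card := by
    intro m
    rw [← hWm_card m]
    refine Finset.card_le_mul_card_image (s := Wm m) (f := comp) _ ?_
    intro b hb
    have hinj : Set.InjOn (fun w => ((⟨(p w).length, Nat.lt_succ_of_le (hp w)⟩ : Fin (C+1)),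
        (⟨(q w).length, Nat.lt_succ_of_le (hq w)⟩ : Fin (C+1))))
        ((Wm m).filter (fun a => comp a = b) : Finset (List A)) := by
      intro w hw w' hw' heq
      simp only [Finset.coe_filter, Set.mem_setOf_eq] at hw hw'
      obtain ⟨hwW, hwb⟩ := hw
      obtain ⟨hw'W, hw'b⟩ := hw'
      have hL1 : (p w).length = (p w').length := by
        have := congrArg (fun x => (x.1 : ℕ)) heq
        simpa using this
      have hL2 : w.length = w'.length := by
        rw [hWm_len m w hwW, hWm_len m w' hw'W]
      have key : ∀ v : List A, comp v = b →
          v = (b.drop (p v).length).take v.length := by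
        intro v hv
        rw [← hv]
        show v = (((p v ++ v ++ q v)).drop (p v).length).take v.length
        rw [List.append_assoc, List.drop_left, List.take_left]
      rw [key w hwb, key w' hw'b, hL1, hL2]
    calc ((Wm m).filter (fun a => comp a = b)).card
        ≤ Fintype.card (Fin (C+1) × Fin (C+1)) := by
          rw [← Finset.card_univ]
          exact Finset.card_le_card_of_injOn _ (fun _ _ => Finset.mem_univ _) hinj
      _ = (C + 1) ^ 2 := by simp [pow_two]
  set c0 : ℝ≥0∞ := (((C + 1) ^ 2 : ℕ) : ℝ≥0∞)⁻¹ * r ^ (2 * C) with hc0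
  have hc0ne : c0 ≠ 0 := by
    rw [hc0]
    refine mul_ne_zero ?_ (pow_ne_zero _ hr0)
    exact ENNReal.inv_ne_zero.2 (ENNReal.natCast_ne_top _)
  have hCne0 : (((C + 1) ^ 2 : ℕ) : ℝ≥0∞) ≠ 0 := by
    simp only [ne_eq, Nat.cast_eq_zero]
    positivity
  have hCnetop : (((C + 1) ^ 2 : ℕ) : ℝ≥0∞) ≠ ⊤ := ENNReal.natCast_ne_top _
  have hkey : ∀ m : ℕ, c0 ≤ ∑ z ∈ Fm m, wt A z := by
    intro m
    have h1 : ∑ z ∈ Fm m, wt A z ≥ ((Fm m).card : ℝ≥0∞) * r ^ (m + 2 * C) := by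
      calc ∑ z ∈ Fm m, wt A z ≥ ∑ _z ∈ Fm m, r ^ (m + 2 * C) := by
            refine Finset.sum_le_sum fun z hz => ?_
            show r ^ (m + 2 * C) ≤ wt A z
            have : wt A z = r ^ z.length := rfl
            rw [this]
            exact pow_le_pow_of_le_one zero_le hr1 (hFm_len m z hz).2
        _ = ((Fm m).card : ℝ≥0∞) * r ^ (m + 2 * C) := by
            rw [Finset.sum_const, nsmul_eq_mul]
    have h2 : r ^ (2 * C) ≤ (((C + 1) ^ 2 : ℕ) : ℝ≥0∞) * (((Fm m).card : ℝ≥0∞) * r ^ (m + 2 * C)) := by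
      have h3 : ((Fintype.card A ^ m : ℕ) : ℝ≥0∞) * r ^ (m + 2 * C)
          ≤ (((C + 1) ^ 2 * (Fm m).card : ℕ) : ℝ≥0∞) * r ^ (m + 2 * C) := by
        refine mul_le_mul_left ?_ _
        exact_mod_cast hFm_card m
      have h4 : ((Fintype.card A ^ m : ℕ) : ℝ≥0∞) * r ^ (m + 2 * C) = r ^ (2 * C) := by
        rw [pow_add]
        rw [← mul_assoc]
        have h5 : ((Fintype.card A ^ m : ℕ) : ℝ≥0∞) * r ^ m = 1 := by
          rw [hr, ← ENNReal.inv_pow]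
          push_cast
          exact ENNReal.mul_inv_cancel (pow_ne_zero _ hcard0) (ENNReal.pow_ne_top hcardtop)
        rw [h5, one_mul]
      calc r ^ (2 * C) = ((Fintype.card A ^ m : ℕ) : ℝ≥0∞) * r ^ (m + 2 * C) := h4.symm
        _ ≤ (((C + 1) ^ 2 * (Fm m).card : ℕ) : ℝ≥0∞) * r ^ (m + 2 * C) := h3
        _ = (((C + 1) ^ 2 : ℕ) : ℝ≥0∞) * (((Fm m).card : ℝ≥0∞) * r ^ (m + 2 * C)) := by
            push_cast
            ring
    calc c0 = (((C + 1) ^ 2 : ℕ) : ℝ≥0∞)⁻¹ * r ^ (2 * C) := hc0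
      _ ≤ (((C + 1) ^ 2 : ℕ) : ℝ≥0∞)⁻¹ *
          ((((C + 1) ^ 2 : ℕ) : ℝ≥0∞) * (((Fm m).card : ℝ≥0∞) * r ^ (m + 2 * C))) :=
            mul_le_mul_right h2 _
      _ = ((Fm m).card : ℝ≥0∞) * r ^ (m + 2 * C) := by
            rw [← mul_assoc, ENNReal.inv_mul_cancel hCne0 hCnetop, one_mul]
      _ ≤ ∑ z ∈ Fm m, wt A z := h1
  -- disjoint windows
  set G : ℕ → Finset (List A) := fun i => Fm (i * (2 * C + 1)) with hG
  have hGdisj : ∀ i j : ℕ, i ≠ j → Disjoint (G i) (G j) := by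
    intro i j hij
    rw [Finset.disjoint_left]
    intro z hzi hzj
    have h1 := hFm_len _ z hzi
    have h2 := hFm_len _ z hzj
    rcases Nat.lt_or_ge i j with h | h
    · have : i * (2 * C + 1) + 2 * C < j * (2 * C + 1) := by nlinarith
      omega
    · have hji : j < i := by omega
      have : j * (2 * C + 1) + 2 * C < i * (2 * C + 1) := by nlinarith
      omega
  have hN : ∀ N : ℕ, (N : ℝ≥0∞) * c0 ≤ nu A (star X) := by
    intro N
    have h1 : ∑ i ∈ Finset.range N, ∑ z ∈ G i, wt A z ≤ nu A (star X) := by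
      rw [← Finset.sum_biUnion (fun i _ j _ hij => hGdisj i j hij)]
      refine sum_le_nu _ fun z hz => ?_
      obtain ⟨i, _, hzi⟩ := Finset.mem_biUnion.1 hz
      exact hFm_mem _ z hzi
    calc (N : ℝ≥0∞) * c0 = ∑ _i ∈ Finset.range N, c0 := by
          rw [Finset.sum_const, nsmul_eq_mul]; simp
      _ ≤ ∑ i ∈ Finset.range N, ∑ z ∈ G i, wt A z :=
          Finset.sum_le_sum fun i _ => hkey _
      _ ≤ nu A (star X) := h1
  have hsup : (⊤ : ℝ≥0∞) ≤ nu A (star X) := by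
    have h1 : (⨆ N : ℕ, (N : ℝ≥0∞) * c0) ≤ nu A (star X) := iSup_le hN
    rwa [← ENNReal.iSup_mul, ENNReal.iSup_natCast, ENNReal.top_mul hc0ne] at h1
  exact top_le_iff.1 hsup




lemma prefix_getElem? {u v : List A} (h : u <+: v) {i : ℕ} (hi : i < u.length) :
    u[i]? = v[i]? := by
  conv_lhs => rw [List.prefix_iff_eq_take.1 h]
  rw [List.getElem?_take, if_pos hi]

lemma sentinel_unbordered {a b : A} (hab : a ≠ b) (w : List A) (m : ℕ) (hm : w.length < m)
    {d : ℕ} (hd0 : 0 < d)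
    (hdlt : d < (List.replicate m a ++ w ++ List.replicate m b).length)
    (hpre : (List.replicate m a ++ w ++ List.replicate m b).drop d
      <+: (List.replicate m a ++ w ++ List.replicate m b)) : False := by
  set y : List A := List.replicate m a ++ w ++ List.replicate m b with hy
  have hm0 : 0 < m := by omega
  have ylen : y.length = m + w.length + m := by simp [hy]; omega
  have yAt : ∀ j, j < m → y[j]? = some a := by
    intro j hj
    show (List.replicate m a ++ w ++ List.replicate m b)[j]? = some a
    have e1 : (List.replicate m a ++ w ++ List.replicate m b)[j]?
        = (List.replicate m a ++ w)[j]? :=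
      List.getElem?_append_left (by simp; omega)
    have e2 : (List.replicate m a ++ w)[j]? = (List.replicate m a)[j]? :=
      List.getElem?_append_left (by simp; omega)
    rw [e1, e2, List.getElem?_replicate, if_pos hj]
  have yB : ∀ j, m + w.length ≤ j → j < m + w.length + m → y[j]? = some b := by
    intro j h1 h2
    show (List.replicate m a ++ w ++ List.replicate m b)[j]? = some b
    have e1 : (List.replicate m a ++ w ++ List.replicate m b)[j]?
        = (List.replicate m b)[j - (List.replicate m a ++ w).length]? :=
      List.getElem?_append_right (by simp; omega)
    rw [e1, List.getElem?_replicate,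
      if_pos (show j - (List.replicate m a ++ w).length < m by simp; omega)]
  have hB : ∀ i, i < y.length - d → y[d + i]? = y[i]? := by
    intro i hi
    have h1 : (y.drop d)[i]? = y[i]? :=
      prefix_getElem? hpre (by rw [List.length_drop]; exact hi)
    rw [List.getElem?_drop] at h1
    exact h1
  have hex : ∃ j : ℕ, y[j]? ≠ some a := by
    refine ⟨m + w.length, ?_⟩
    rw [yB (m + w.length) le_rfl (by omega)]
    simp [hab.symm]
  set p := Nat.find hex with hp
  have hpspec : y[p]? ≠ some a := Nat.find_spec hex
  have hple : p ≤ m + w.length := Nat.find_min' hex (by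
    rw [yB (m + w.length) le_rfl (by omega)]
    simp [hab.symm])
  have hpm : m ≤ p := by
    by_contra hc
    push_neg at hc
    exact hpspec (yAt p hc)
  rw [ylen] at hdlt
  rcases le_or_gt d p with hdp | hpd
  · have hi : p - d < y.length - d := by omega
    have := hB (p - d) hi
    rw [show d + (p - d) = p by omega] at this
    have hmin : ¬ (y[p - d]? ≠ some a) := Nat.find_min hex (by omega)
    push_neg at hmin
    exact hpspec (this.trans hmin)
  · have hwd : w.length < d := by omega
    rcases le_or_gt d (m + w.length) with hd1 | hd1
    · have hi : m + w.length - d < y.length - d := by omega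
      have := hB (m + w.length - d) hi
      rw [show d + (m + w.length - d) = m + w.length by omega] at this
      rw [yB (m + w.length) le_rfl (by omega), yAt (m + w.length - d) (by omega)] at this
      exact hab (Option.some_inj.1 this).symm
    · have hi : 0 < y.length - d := by omega
      have := hB 0 hi
      rw [Nat.add_zero] at this
      rw [yB d (by omega) (by omega), yAt 0 (by omega)] at this
      exact hab (Option.some_inj.1 this).symm

lemma prefix_of_prefix_le {u v z : List A} (hu : u <+: z) (hv : v <+: z)
    (h : u.length ≤ v.length) : u <+: v := by
  rcases List.prefix_or_prefix_of_prefix hu hv with h1 | h1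
  · exact h1
  · have h2 := h1.eq_of_length (le_antisymm h1.length_le h)
    rw [h2]

lemma first_block {X : Set (List A)} {y : List A} :
    ∀ l : List (List A), (∀ x ∈ l, x ∈ insert y X) →
      (∀ x ∈ l, x ∈ X) ∨ ∃ l1 l2, l = l1 ++ y :: l2 ∧ ∀ x ∈ l1, x ∈ X := by
  intro l hl
  induction l with
  | nil => left; simp
  | cons x l' ih =>
    rcases Set.mem_insert_iff.1 (hl x (by simp)) with hxy | hxX
    · right
      exact ⟨[], l', by simp [hxy], by simp⟩
    · rcases ih (fun z hz => hl z (List.mem_cons_of_mem _ hz)) with hall | ⟨l1, l2, rfl, hl1⟩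
      · left
        intro z hz
        rcases List.mem_cons.1 hz with rfl | hz'
        exacts [hxX, hall z hz']
      · right
        refine ⟨x :: l1, l2, by simp, ?_⟩
        intro z hz
        rcases List.mem_cons.1 hz with rfl | hz'
        exacts [hxX, hl1 z hz']

lemma asym {X : Set (List A)} {y : List A}
    (hynf : ∀ z ∈ star X, ¬ y <:+: z)
    (hunb : ∀ d : ℕ, 0 < d → d < y.length → ¬ (y.drop d <+: y))
    {u1 u2 r1 r2 : List A} (hu1 : u1 ∈ star X) (hu2 : u2 ∈ star X)
    (heq : u1 ++ y ++ r1 = u2 ++ y ++ r2) (hlen : u1.length ≤ u2.length) :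
    u1 = u2 := by
  have hp1 : u1 ++ y <+: u1 ++ y ++ r1 := ⟨r1, rfl⟩
  have hp2 : u2 ++ y <+: u1 ++ y ++ r1 := by rw [heq]; exact ⟨r2, rfl⟩
  have hq1 : u1 <+: u1 ++ y ++ r1 := ⟨y ++ r1, by simp⟩
  have hq2 : u2 <+: u1 ++ y ++ r1 := by rw [heq]; exact ⟨y ++ r2, by simp⟩
  rcases le_or_gt (u1.length + y.length) u2.length with hle | hlt
  · exfalso
    have h1 : u1 ++ y <+: u2 := prefix_of_prefix_le hp1 hq2 (by simp; omega)
    obtain ⟨t, ht⟩ := h1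
    exact hynf u2 hu2 ⟨u1, t, ht⟩
  · rcases eq_or_lt_of_le hlen with heql | hlt2
    · exact List.IsPrefix.eq_of_length (prefix_of_prefix_le hq1 hq2 hlen) heql
    · exfalso
      have hu12 : u1 <+: u2 := prefix_of_prefix_le hq1 hq2 hlen
      obtain ⟨dd, rfl⟩ := hu12
      have hddlen : 0 < dd.length := by
        rw [List.length_append] at hlt2
        omega
      have hddlt : dd.length < y.length := by
        rw [List.length_append] at hlt
        omega
      have hc : y ++ r1 = dd ++ (y ++ r2) := by
        have h4 : u1 ++ (y ++ r1) = u1 ++ (dd ++ (y ++ r2)) := by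
          rw [← List.append_assoc, heq]
          simp [List.append_assoc]
        exact List.append_cancel_left h4
      have hdrop : y.drop dd.length ++ r1 = y ++ r2 := by
        have h5 := congrArg (List.drop dd.length) hc
        rwa [List.drop_append, Nat.sub_eq_zero_of_le hddlt.le,
          List.drop_zero, List.drop_left] at h5
      have hpref : y.drop dd.length <+: y := by
        refine prefix_of_prefix_le ⟨r1, hdrop⟩ ⟨r2, rfl⟩ ?_
        rw [List.length_drop]
        omega
      exact hunb dd.length hddlen hddlt hpref

lemma ext_code {X : Set (List A)} (hcode : IsCode X) {y : List A} (hyne : y ≠ [])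
    (hynf : ∀ z ∈ star X, ¬ y <:+: z)
    (hunb : ∀ d : ℕ, 0 < d → d < y.length → ¬ (y.drop d <+: y)) :
    IsCode (insert y X) := by
  have main : ∀ n : ℕ, ∀ l m' : List (List A), l.flatten.length < n →
      (∀ x ∈ l, x ∈ insert y X) → (∀ x ∈ m', x ∈ insert y X) →
      l.flatten = m'.flatten → l = m' := by
    intro n
    induction n with
    | zero => intro l m' h _ _ _; exact absurd h (Nat.not_lt_zero _)
    | succ n ih =>
      intro l m' hlen hl hm heq
      rcases first_block l hl with hlX | ⟨l1, l2, rfl, hl1⟩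
      · rcases first_block m' hm with hmX | ⟨m1, m2, rfl, hm1⟩
        · exact hcode l m' hlX hmX heq
        · exfalso
          apply hynf l.flatten ⟨l, hlX, rfl⟩
          rw [heq]
          exact ⟨m1.flatten, m2.flatten, by simp⟩
      · rcases first_block m' hm with hmX | ⟨m1, m2, rfl, hm1⟩
        · exfalso
          apply hynf m'.flatten ⟨m', hmX, rfl⟩
          rw [← heq]
          exact ⟨l1.flatten, l2.flatten, by simp⟩
        · have hfl : (l1 ++ y :: l2).flatten = l1.flatten ++ y ++ l2.flatten := by simp
          have hfm : (m1 ++ y :: m2).flatten = m1.flatten ++ y ++ m2.flatten := by simp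
          rw [hfl, hfm] at heq
          have hl1star : l1.flatten ∈ star X := ⟨l1, hl1, rfl⟩
          have hm1star : m1.flatten ∈ star X := ⟨m1, hm1, rfl⟩
          have h12 : l1.flatten = m1.flatten := by
            rcases le_total l1.flatten.length m1.flatten.length with hle | hle
            · exact asym hynf hunb hl1star hm1star heq hle
            · exact (asym hynf hunb hm1star hl1star heq.symm hle).symm
          have hll : l1 = m1 := hcode l1 m1 hl1 hm1 h12
          subst hll
          rw [h12] at heq
          have h2 : l2.flatten = m2.flatten := by
            rw [List.append_assoc, List.append_assoc] at heq
            exact List.append_cancel_left (List.append_cancel_left heq)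
          have h3 : l2 = m2 := by
            refine ih l2 m2 ?_ (fun x hx => hl x (by simp [hx])) (fun x hx => hm x (by simp [hx])) h2
            have hflen : (l1 ++ y :: l2).flatten.length
                = l1.flatten.length + y.length + l2.flatten.length := by
              rw [hfl]; simp; omega
            have hy1 : 0 < y.length := List.length_pos_iff.2 hyne
            omega
          rw [h3]
  intro l m' hl hm heq
  exact main (l.flatten.length + 1) l m' (by omega) hl hm heq


-- lcp facts
lemma lcp_mem (w w' : List A) :
    ∃ p : List A, p.length = lcpLen w w' ∧ p <+: w ∧ p <+: w' := by
  have hne : Set.Nonempty {n | ∃ p : List A, p.length = n ∧ p <+: w ∧ p <+: w'} :=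
    ⟨0, [], rfl, List.nil_prefix, List.nil_prefix⟩
  have hbdd : BddAbove {n | ∃ p : List A, p.length = n ∧ p <+: w ∧ p <+: w'} := by
    refine ⟨w.length, ?_⟩
    rintro n ⟨p, hp, hpw, _⟩
    exact hp ▸ hpw.length_le
  exact Nat.sSup_mem hne hbdd

lemma lcpLen_comm (w w' : List A) : lcpLen w w' = lcpLen w' w := by
  unfold lcpLen
  congr 1
  ext n
  constructor <;> rintro ⟨p, h1, h2, h3⟩ <;> exact ⟨p, h1, h3, h2⟩

lemma dP_comm (w w' : List A) : dP w w' = dP w' w := by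
  unfold dP
  rw [lcpLen_comm]
  omega

section Main

variable {X : Set (List A)} (hA : 2 ≤ Fintype.card A)

lemma mu_eq_nu (S : Set (List A)) : mu A S = nu A S := tsum_subtype S (wt A)

include hA in
lemma mu_one_max (hmu : nu A X = 1) :
    ∀ Y : Set (List A), IsCode Y → X ⊆ Y → Y = X := by
  intro Y hY hXY
  by_contra hne
  obtain ⟨y0, hy0Y, hy0X⟩ := Set.not_subset.1 (fun h => hne (h.antisymm hXY))
  have hwt0 : wt A y0 ≠ 0 := by
    unfold wt
    refine pow_ne_zero _ ?_
    refine ENNReal.inv_ne_zero.2 (ENNReal.natCast_ne_top _)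
  have h1 : (1 : ℝ≥0∞) < wt A y0 + 1 := by
    rw [add_comm]
    exact ENNReal.lt_add_right ENNReal.one_ne_top hwt0
  have h2 : wt A y0 + 1 ≤ nu A Y := by
    rw [← hmu, ← nu_insert_of_not_mem hy0X]
    exact nu_mono (Set.insert_subset hy0Y hXY)
  have h3 := kraft hA hY
  exact absurd ((h1.trans_le h2).trans_le h3) (lt_irrefl _)

include hA in
lemma complete_mu_one (hreg : IsRegularLang X) (hcode : IsCode X)
    (hcomp : IsCompleteSet X) : nu A X = 1 := by
  have hle := kraft hA hcode
  refine le_antisymm hle ?_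
  by_contra hlt
  push_neg at hlt
  obtain ⟨Q, hQ, M, hM⟩ := hreg
  letI : Fintype Q := hQ
  have hcomp' : ∀ w : List A, ∃ p q, p ++ w ++ q ∈ star X := by
    intro w
    obtain ⟨l, hl, hinf⟩ := hcomp w
    obtain ⟨s, t, hst⟩ := hinf
    exact ⟨s, t, ⟨l, hl, hst.symm⟩⟩
  obtain ⟨C, hC⟩ := bounded_completion M hM hcomp'
  exact nu_star_ne_top hlt (nu_star_top hA C hC)

include hA in
lemma indmax_complete (k : ℕ) (hk : 1 ≤ k) (hcode : IsCode X)
    (hind : ¬ ∃ x ∈ X, ∃ y ∈ X, x ≠ y ∧ dP x y ≤ k)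
    (hmax : ∀ Y : Set (List A), IsCode Y →
      (¬ ∃ x ∈ Y, ∃ y ∈ Y, x ≠ y ∧ dP x y ≤ k) → X ⊆ Y → Y = X) :
    IsCompleteSet X := by
  by_contra hnc
  rw [IsCompleteSet] at hnc
  push_neg at hnc
  obtain ⟨w, hw⟩ := hnc
  have hwstar : ∀ z ∈ star X, ¬ w <:+: z := by
    rintro z ⟨l, hl, rfl⟩
    exact hw l hl
  obtain ⟨a, b, hab⟩ := Fintype.exists_pair_of_one_lt_card (α := A) (by omega)
  set m : ℕ := max (w.length + 1) k with hmdef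
  have hmw : w.length < m := by
    have := le_max_left (w.length + 1) k
    omega
  have hmk : k ≤ m := le_max_right _ _
  set y : List A := List.replicate m a ++ w ++ List.replicate m b with hy
  have hwy : w <:+: y := ⟨List.replicate m a, List.replicate m b, rfl⟩
  have hylen : y.length = m + w.length + m := by
    simp [hy]; omega
  have hyne : y ≠ [] := by
    apply List.ne_nil_of_length_pos
    rw [hylen]; omega
  have hynf : ∀ z ∈ star X, ¬ y <:+: z := fun z hz hyz => hwstar z hz (hwy.trans hyz)
  have hunb : ∀ d : ℕ, 0 < d → d < y.length → ¬ (y.drop d <+: y) := by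
    intro d hd0 hdlt hpre
    exact sentinel_unbordered hab w m hmw hd0 hdlt hpre
  have hycode : IsCode (insert y X) := ext_code hcode hyne hynf hunb
  have hyX : y ∉ X := fun hyX => hynf y (mem_star_of_mem hyX) (List.infix_refl y)
  have close_contra : ∀ x, x ∈ X → dP x y ≤ k → False := by
    intro x hxX hd
    obtain ⟨p, hplen, hpx, hpy⟩ := lcp_mem x y
    have hd2 : x.length + y.length - 2 * lcpLen x y ≤ k := hd
    rw [← hplen] at hd2
    have hpxle : p.length ≤ x.length := hpx.length_le
    have hpyle : p.length ≤ y.length := hpy.length_le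
    have h2 : m + w.length ≤ p.length := by
      rw [hylen] at hd2 hpyle
      omega
    have h3 : List.replicate m a ++ w <+: y := ⟨List.replicate m b, rfl⟩
    have h4 : List.replicate m a ++ w <+: p := by
      refine prefix_of_prefix_le h3 hpy ?_
      simp
      omega
    have h5 : w <:+: x := by
      have h6 : w <:+: List.replicate m a ++ w := ⟨List.replicate m a, [], by simp⟩
      exact h6.trans (h4.trans hpx).isInfix
    exact hwstar x (mem_star_of_mem hxX) h5
  have hind' : ¬ ∃ x ∈ insert y X, ∃ x' ∈ insert y X, x ≠ x' ∧ dP x x' ≤ k := by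
    rintro ⟨x, hx, x', hx', hne, hd⟩
    rcases Set.mem_insert_iff.1 hx with rfl | hxX
    · rcases Set.mem_insert_iff.1 hx' with rfl | hx'X
      · exact hne rfl
      · exact close_contra x' hx'X (by rwa [dP_comm] at hd)
    · rcases Set.mem_insert_iff.1 hx' with rfl | hx'X
      · exact close_contra x hxX hd
      · exact hind ⟨x, hxX, x', hx'X, hne, hd⟩
  have heq := hmax _ hycode hind' (Set.subset_insert y X)
  exact hyX (heq ▸ Set.mem_insert y X)

end Main

end S13

/-- for a regular `P̲_k`-independent code `X`, maximality among
`P̲_k`-independent codes, maximality among codes, completeness, and `μ(X) = 1`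
are pairwise equivalent. -/
theorem stmt_13 {A : Type*} [Fintype A] (hA : 2 ≤ Fintype.card A)
    (k : ℕ) (hk : 1 ≤ k) (X : Set (List A))
    (hreg : IsRegularLang X) (hcode : IsCode X)
    (hind : ¬ ∃ x ∈ X, ∃ y ∈ X, x ≠ y ∧ dP x y ≤ k) :
    ((∀ Y : Set (List A), IsCode Y → (¬ ∃ x ∈ Y, ∃ y ∈ Y, x ≠ y ∧ dP x y ≤ k) →
        X ⊆ Y → Y = X) ↔
      (∀ Y : Set (List A), IsCode Y → X ⊆ Y → Y = X)) ∧
    ((∀ Y : Set (List A), IsCode Y → X ⊆ Y → Y = X) ↔ IsCompleteSet X) ∧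
    (IsCompleteSet X ↔ mu A X = 1) := by
  have hnu : mu A X = S13.nu A X := S13.mu_eq_nu X
  have imp1 : (∀ Y : Set (List A), IsCode Y → X ⊆ Y → Y = X) →
      (∀ Y : Set (List A), IsCode Y → (¬ ∃ x ∈ Y, ∃ y ∈ Y, x ≠ y ∧ dP x y ≤ k) →
        X ⊆ Y → Y = X) := fun h Y hY _ hXY => h Y hY hXY
  have imp2 : (∀ Y : Set (List A), IsCode Y → (¬ ∃ x ∈ Y, ∃ y ∈ Y, x ≠ y ∧ dP x y ≤ k) →
      X ⊆ Y → Y = X) → IsCompleteSet X :=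
    fun h => S13.indmax_complete hA k hk hcode hind h
  have imp3 : IsCompleteSet X → mu A X = 1 := fun h => by
    rw [hnu]
    exact S13.complete_mu_one hA hreg hcode h
  have imp4 : mu A X = 1 → (∀ Y : Set (List A), IsCode Y → X ⊆ Y → Y = X) := fun h => by
    rw [hnu] at h
    exact S13.mu_one_max hA h
  exact ⟨⟨fun h => imp4 (imp3 (imp2 h)), imp1⟩,
    ⟨fun h => imp2 (imp1 h), fun h => imp4 (imp3 h)⟩,
    ⟨imp3, fun h => imp2 (imp1 (imp4 h))⟩⟩
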